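/- arXiv:1110.3470 — 2 statements merged into one kernel-verified Lean document; each statement's English description precedes it below -/
import Mathlib

section
/- (Specificity of multi-method dispatch, abstract version) Let O be a finite set of branches, each branch given by a signature (a sequence of argument types) and a return type. Suppose O satisfies: (covariance) for any two branches with signatures Ī <: J̄, the return types satisfy I₀ <: J₀; and (completeness) for any two branches with signatures Ī and J̄ that have a common lower bound, there is a branch in O whose signature is the maximal lower bound of Ī and J̄. Then for any argument type sequence C̄ for which at least one applicable branch exists (a branch whose signature B̄ satisfies C̄ <: B̄), the set of applicable branches has a unique minimal element with respect to pointwise subtyping of signatures. -/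
/-- Single inheritance: the up-set of any class is linearly ordered by `≤`. -/
def SingleInheritance (α : Type*) [PartialOrder α] : Prop :=
  ∀ c a b : α, c ≤ a → c ≤ b → a ≤ b ∨ b ≤ a

/-- `K` is a maximal lower bound of `A` and `B`. -/
def MaximalLowerBound {β : Type*} [PartialOrder β] (K A B : β) : Prop :=
  K ≤ A ∧ K ≤ B ∧ ∀ K', K ≤ K' → K' ≤ A → K' ≤ B → K' = K

/-- A branch: a signature (sequence of argument types) and a return type. -/
structure Branch (α : Type*) (n : ℕ) where
  sig : Fin n → α
  ret : α

/-- Specificity of multi-method dispatch (abstract version): given covariance and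
completeness of the finite branch set `O`, any argument type sequence with at
least one applicable branch has a unique most specific applicable branch. -/
theorem unique_most_specific_branch {α : Type*} [PartialOrder α]
    (hSI : SingleInheritance α) {n : ℕ} (O : Finset (Branch α n))
    (hcov : ∀ b₁ ∈ O, ∀ b₂ ∈ O, b₁.sig ≤ b₂.sig → b₁.ret ≤ b₂.ret)
    (hcomp : ∀ b₁ ∈ O, ∀ b₂ ∈ O, (∃ L, L ≤ b₁.sig ∧ L ≤ b₂.sig) →
      ∃ b ∈ O, MaximalLowerBound b.sig b₁.sig b₂.sig)
    (Cs : Fin n → α) (happ : ∃ b ∈ O, Cs ≤ b.sig) :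
    ∃! b, b ∈ O ∧ Cs ≤ b.sig ∧ ∀ b' ∈ O, Cs ≤ b'.sig → b.sig ≤ b'.sig := by
  classical
  obtain ⟨b₀, hb₀O, hb₀⟩ := happ
  set T := O.filter (fun b => Cs ≤ b.sig) with hT
  have hb₀T : b₀ ∈ T := Finset.mem_filter.mpr ⟨hb₀O, hb₀⟩
  have hTne : (T.image Branch.sig).Nonempty :=
    ⟨b₀.sig, Finset.mem_image_of_mem _ hb₀T⟩
  obtain ⟨s, hs, hmin⟩ : ∃ s ∈ T.image Branch.sig, ∀ x ∈ T.image Branch.sig, ¬ x < s := by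
    obtain ⟨s, hs, h⟩ := Finset.exists_minimal hTne
    exact ⟨s, hs, fun x hx hlt => hlt.not_ge (h hx hlt.le)⟩
  obtain ⟨b, hbT, hbs⟩ := Finset.mem_image.mp hs
  have hbO : b ∈ O := (Finset.mem_filter.mp hbT).1
  have hbCs : Cs ≤ b.sig := (Finset.mem_filter.mp hbT).2
  have key : ∀ b' ∈ O, Cs ≤ b'.sig → b.sig ≤ b'.sig := by
    intro b' hb'O hb'Cs
    obtain ⟨m, hmO, h1, h2, hmax⟩ := hcomp b hbO b' hb'O ⟨Cs, hbCs, hb'Cs⟩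
    -- pointwise min of b.sig and b'.sig (they are comparable above Cs)
    set M : Fin n → α := fun i => if b.sig i ≤ b'.sig i then b.sig i else b'.sig i with hM
    have hcmp : ∀ i, b.sig i ≤ b'.sig i ∨ b'.sig i ≤ b.sig i :=
      fun i => hSI (Cs i) _ _ (hbCs i) (hb'Cs i)
    have hMb : M ≤ b.sig := by
      intro i; by_cases h : b.sig i ≤ b'.sig i
      · simp [hM, h]
      · have := (hcmp i).resolve_left h
        simp [hM, h, this]
    have hMb' : M ≤ b'.sig := by
      intro i; by_cases h : b.sig i ≤ b'.sig i
      · simp [hM, h]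
      · simp [hM, h]
    have hmM : m.sig ≤ M := by
      intro i; by_cases h : b.sig i ≤ b'.sig i
      · simpa [hM, h] using h1 i
      · simpa [hM, h] using h2 i
    have hMeq : M = m.sig := hmax M hmM hMb hMb'
    have hCsM : Cs ≤ M := by
      intro i; by_cases h : b.sig i ≤ b'.sig i
      · simpa [hM, h] using hbCs i
      · simpa [hM, h] using hb'Cs i
    have hCsm : Cs ≤ m.sig := hMeq ▸ hCsM
    have hmT : m ∈ T := Finset.mem_filter.mpr ⟨hmO, hCsm⟩
    have hmIm : m.sig ∈ T.image Branch.sig := Finset.mem_image_of_mem _ hmT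
    have hms : m.sig ≤ s := hbs ▸ h1
    have : m.sig = s := by
      by_contra hne
      exact hmin m.sig hmIm (lt_of_le_of_ne hms hne)
    calc b.sig = m.sig := (hbs ▸ this).symm
      _ ≤ b'.sig := h2
  refine ⟨b, ⟨hbO, hbCs, key⟩, ?_⟩
  rintro b' ⟨hb'O, hb'Cs, hb'min⟩
  have hsig : b'.sig = b.sig :=
    le_antisymm (hb'min b hbO hbCs) (key b' hb'O hb'Cs)
  have hret : b'.ret = b.ret :=
    le_antisymm (hcov b' hb'O b hbO hsig.le) (hcov b hbO b' hb'O hsig.ge)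
  cases b; cases b'; simp_all
end

section
/- (Monotonicity of selection) Under the hypotheses of branch covariance and completeness, if select(C̄) denotes the unique most specific branch applicable to C̄, then for any D̄ <: C̄ (pointwise), select(D̄) exists, its signature is a subtype (pointwise) of the signature of select(C̄), and its return type is a subtype of the return type of select(C̄). -/
/-- `b` is the (unique) most specific branch of `O` applicable to `Cs`. -/
def IsSelect {α : Type*} [PartialOrder α] {n : ℕ} (O : Finset (Branch α n))
    (Cs : Fin n → α) (b : Branch α n) : Prop :=
  b ∈ O ∧ Cs ≤ b.sig ∧ ∀ b' ∈ O, Cs ≤ b'.sig → b.sig ≤ b'.sig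

/-- Monotonicity of selection: under covariance and completeness, if `bC` is the
most specific branch applicable to `Cs` and `Ds ≤ Cs`, then `select(Ds)` exists,
its signature is pointwise below that of `bC`, and its return type is below that
of `bC`. -/
theorem select_monotone {α : Type*} [PartialOrder α]
    (hSI : SingleInheritance α) {n : ℕ} (O : Finset (Branch α n))
    (hcov : ∀ b₁ ∈ O, ∀ b₂ ∈ O, b₁.sig ≤ b₂.sig → b₁.ret ≤ b₂.ret)
    (hcomp : ∀ b₁ ∈ O, ∀ b₂ ∈ O, (∃ L, L ≤ b₁.sig ∧ L ≤ b₂.sig) →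
      ∃ b ∈ O, MaximalLowerBound b.sig b₁.sig b₂.sig)
    (Cs Ds : Fin n → α) (hDC : Ds ≤ Cs)
    (bC : Branch α n) (hbC : IsSelect O Cs bC) :
    ∃ bD, IsSelect O Ds bD ∧ bD.sig ≤ bC.sig ∧ bD.ret ≤ bC.ret := by
  classical
  obtain ⟨hbCO, hCsig, hmin⟩ := hbC
  -- the set of signatures of branches applicable to Ds
  set S : Finset (Fin n → α) := (O.filter (fun b => Ds ≤ b.sig)).image Branch.sig with hS
  have hbCS : bC.sig ∈ S := by
    refine Finset.mem_image.2 ⟨bC, Finset.mem_filter.2 ⟨hbCO, le_trans hDC hCsig⟩, rfl⟩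
  obtain ⟨m, hmS, hmmin⟩ : ∃ m ∈ S, ∀ x ∈ S, ¬ x < m := by
    obtain ⟨m, hm⟩ := Finset.exists_minimal (s := S) ⟨bC.sig, hbCS⟩
    exact ⟨m, hm.1, fun x hx hlt => lt_irrefl _ (lt_of_lt_of_le hlt (hm.2 hx hlt.le))⟩
  obtain ⟨bD, hbDS, hbDsig⟩ := Finset.mem_image.1 hmS
  obtain ⟨hbDO, hDsig⟩ := Finset.mem_filter.1 hbDS
  -- bD is a minimum among applicable branches
  have key : ∀ b' ∈ O, Ds ≤ b'.sig → bD.sig ≤ b'.sig := by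
    intro b' hb'O hDb'
    obtain ⟨b, hbO, hb1, hb2, hbmax⟩ := hcomp bD hbDO b' hb'O ⟨Ds, hDsig, hDb'⟩
    -- pointwise min of bD.sig and b'.sig
    set g : Fin n → α := fun i => if bD.sig i ≤ b'.sig i then bD.sig i else b'.sig i with hg
    have hg1 : g ≤ bD.sig := by
      intro i; by_cases h : bD.sig i ≤ b'.sig i <;> simp only [hg, h, if_true, if_false, le_refl]
      · rcases hSI (Ds i) (bD.sig i) (b'.sig i) (hDsig i) (hDb' i) with h1 | h1
        · exact absurd h1 h
        · simpa [h] using h1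
    have hg2 : g ≤ b'.sig := by
      intro i; by_cases h : bD.sig i ≤ b'.sig i <;> simp [hg, h]
    have hDg : Ds ≤ g := by
      intro i; by_cases h : bD.sig i ≤ b'.sig i <;> simp [hg, h, hDsig i, hDb' i]
    have hbg : b.sig ≤ g := by
      intro i; by_cases h : bD.sig i ≤ b'.sig i <;> simp [hg, h, hb1 i, hb2 i]
    have heq : g = b.sig := hbmax g hbg hg1 hg2
    have hDb : Ds ≤ b.sig := heq ▸ hDg
    have hbS : b.sig ∈ S := Finset.mem_image.2 ⟨b, Finset.mem_filter.2 ⟨hbO, hDb⟩, rfl⟩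
    have : ¬ b.sig < m := hmmin b.sig hbS
    have hble : b.sig ≤ bD.sig := hb1
    have : b.sig = bD.sig := by
      by_contra hne
      exact this (hbDsig ▸ lt_of_le_of_ne hble hne)
    calc bD.sig = b.sig := this.symm
      _ ≤ b'.sig := hb2
  have hle : bD.sig ≤ bC.sig := key bC hbCO (le_trans hDC hCsig)
  exact ⟨bD, ⟨hbDO, hDsig, key⟩, hle, hcov bD hbDO bC hbCO hle⟩
end
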